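/- Let π' = (a_1,b_1)...(a_k,b_k) be a fixed-point free involution of S_{2k} in standard form. A permutation w of S_{2k} satisfies m(w)·α' = π' and ℓ(w) = L'(π') — where α' = (1,2)(3,4)···(2k−1,2k) and L'(π') is the inversion number of the word (a_1,b_1,...,a_k,b_k) — if and only if: (1) for each i, a_i occurs immediately before b_i in the one-line notation of w; and (2) whenever i<j and b_i<b_j, b_i occurs before a_j in w. -/

import Mathlib

/-- The number of inversions (Coxeter length) of a permutation of `Fin n`. -/
def invNum {n : ℕ} (w : Equiv.Perm (Fin n)) : ℕ :=
  (Finset.univ.filter fun p : Fin n × Fin n => p.1 < p.2 ∧ w p.2 < w p.1).card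

/-- The simple transposition `s_i = (i, i+1)` (0-indexed) in `S_n`, or `1` if out of range. -/
def sNat (n i : ℕ) : Equiv.Perm (Fin n) :=
  if h : i + 1 < n then Equiv.swap ⟨i, Nat.lt_of_succ_lt h⟩ ⟨i + 1, h⟩ else 1

/-- The Richardson–Springer monoid action of `m(s_i)` on fixed-point free involutions:
`s_i π s_i` if `ℓ(s_i π s_i) = ℓ(π) + 2`, and `π` otherwise. -/
def RSfpf (n i : ℕ) (π : Equiv.Perm (Fin n)) : Equiv.Perm (Fin n) :=
  if invNum (sNat n i * π * sNat n i) = invNum π + 2 then sNat n i * π * sNat n i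
  else π

/-- The word `(a_1, b_1, a_2, b_2, …, a_k, b_k)` of a fixed-point free involution in
standard form, as a function `Fin (2k) → Fin (2k)`. -/
def word (k : ℕ) (a b : Fin k → Fin (2 * k)) (j : Fin (2 * k)) : Fin (2 * k) :=
  if (j : ℕ) % 2 = 0 then a ⟨(j : ℕ) / 2, by have := j.2; omega⟩
  else b ⟨(j : ℕ) / 2, by have := j.2; omega⟩

/-- The number of inversions of the word `(a_1, b_1, …, a_k, b_k)`. -/
def invWord (k : ℕ) (a b : Fin k → Fin (2 * k)) : ℕ :=
  (Finset.univ.filter fun p : Fin (2 * k) × Fin (2 * k) =>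
    p.1 < p.2 ∧ word k a b p.2 < word k a b p.1).card

/-- The fixed-point free involution `α' = (1,2)(3,4)⋯(2k−1,2k)` of `S_{2k}`
(0-indexed: it swaps `2m` and `2m+1` for each `m`). -/
def alpha (k : ℕ) : Equiv.Perm (Fin (2 * k)) :=
  Function.Involutive.toPerm
    (fun x => ⟨2 * ((x : ℕ) / 2) + (1 - (x : ℕ) % 2), by have := x.2; omega⟩)
    (by intro x; apply Fin.ext; simp only [Fin.val_mk]; omega)

open Equiv

lemma invNum_one {n : ℕ} : invNum (1 : Equiv.Perm (Fin n)) = 0 := by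
  unfold invNum
  rw [Finset.card_eq_zero, Finset.filter_eq_empty_iff]
  rintro p -
  simp only [Equiv.Perm.one_apply]
  rintro ⟨h1, h2⟩
  exact absurd h2 (not_lt.2 h1.le)

lemma invNum_inv {n : ℕ} (u : Equiv.Perm (Fin n)) : invNum u⁻¹ = invNum u := by
  unfold invNum
  apply Finset.card_bij' (fun p _ => (u⁻¹ p.2, u⁻¹ p.1)) (fun p _ => (u p.2, u p.1)) <;>
    simp_all [Finset.mem_filter]

lemma sNat_mul_self {n i : ℕ} : sNat n i * sNat n i = 1 := by
  unfold sNat; split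
  · exact Equiv.swap_mul_self _ _
  · simp

lemma sNat_inv {n i : ℕ} : (sNat n i)⁻¹ = sNat n i := by
  unfold sNat; split
  · simp
  · simp

lemma swap_adj_lt {n i : ℕ} (h : i + 1 < n) {p q : Fin n} (hpq : p < q)
    (hne : ¬(p = ⟨i, Nat.lt_of_succ_lt h⟩ ∧ q = ⟨i + 1, h⟩)) :
    Equiv.swap ⟨i, Nat.lt_of_succ_lt h⟩ ⟨i + 1, h⟩ p <
      Equiv.swap ⟨i, Nat.lt_of_succ_lt h⟩ ⟨i + 1, h⟩ q := by
  simp only [Equiv.swap_apply_def]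
  simp only [Fin.ext_iff, Fin.lt_def] at *
  split_ifs <;> simp_all <;> omega

lemma invNum_mul_sNat_of_ascent {n i : ℕ} (h : i + 1 < n) (u : Equiv.Perm (Fin n))
    (hd : u ⟨i, Nat.lt_of_succ_lt h⟩ < u ⟨i + 1, h⟩) :
    invNum (u * sNat n i) = invNum u + 1 := by
  set x : Fin n := ⟨i, Nat.lt_of_succ_lt h⟩
  set y : Fin n := ⟨i + 1, h⟩
  have hs : sNat n i = Equiv.swap x y := by unfold sNat; rw [dif_pos h]
  set S := (Finset.univ.filter fun p : Fin n × Fin n =>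
    p.1 < p.2 ∧ (u * sNat n i) p.2 < (u * sNat n i) p.1) with hS
  set T := (Finset.univ.filter fun p : Fin n × Fin n => p.1 < p.2 ∧ u p.2 < u p.1) with hT
  have hxy : x < y := by simp [x, y, Fin.lt_def]
  have hmem : (x, y) ∈ S := by
    simp only [hS, Finset.mem_filter, Finset.mem_univ, true_and, hs, Equiv.Perm.mul_apply]
    exact ⟨hxy, by rwa [Equiv.swap_apply_left, Equiv.swap_apply_right]⟩
  have key : (S.erase (x, y)).card = T.card := by
    apply Finset.card_bij' (fun p _ => (Equiv.swap x y p.1, Equiv.swap x y p.2))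
      (fun p _ => (Equiv.swap x y p.1, Equiv.swap x y p.2))
    · rintro ⟨p, q⟩ hp
      rw [Finset.mem_erase] at hp
      obtain ⟨hne, hp⟩ := hp
      simp only [hS, Finset.mem_filter, Finset.mem_univ, true_and, hs,
        Equiv.Perm.mul_apply] at hp
      simp only [hT, Finset.mem_filter, Finset.mem_univ, true_and]
      refine ⟨swap_adj_lt h hp.1 ?_, hp.2⟩
      rintro ⟨rfl, rfl⟩; exact hne rfl
    · rintro ⟨p, q⟩ hp
      simp only [hT, Finset.mem_filter, Finset.mem_univ, true_and] at hp
      have hne : ¬(p = x ∧ q = y) := by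
        rintro ⟨rfl, rfl⟩; exact absurd hp.2 (not_lt.2 hd.le)
      rw [Finset.mem_erase]
      constructor
      · intro hc
        rw [Prod.ext_iff] at hc
        obtain ⟨h1, h2⟩ := hc
        simp only at h1 h2
        have hp1 : p = y := by
          have := congrArg (Equiv.swap x y) h1
          rwa [Equiv.swap_apply_self, Equiv.swap_apply_left] at this
        have hq1 : q = x := by
          have := congrArg (Equiv.swap x y) h2
          rwa [Equiv.swap_apply_self, Equiv.swap_apply_right] at this
        subst hp1; subst hq1
        exact absurd hp.1 (not_lt.2 hxy.le)
      · simp only [hS, Finset.mem_filter, Finset.mem_univ, true_and, hs,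
          Equiv.Perm.mul_apply, Equiv.swap_apply_self]
        exact ⟨swap_adj_lt h hp.1 hne, hp.2⟩
    · rintro ⟨p, q⟩ _; simp [Equiv.swap_apply_self]
    · rintro ⟨p, q⟩ _; simp [Equiv.swap_apply_self]
  have : S.card = S.card - 1 + 1 := (Nat.succ_pred_eq_of_pos (Finset.card_pos.2 ⟨_, hmem⟩)).symm
  rw [invNum, invNum]
  rw [← hS, ← hT, this, ← Finset.card_erase_of_mem hmem, key]

lemma invNum_mul_sNat_of_descent {n i : ℕ} (h : i + 1 < n) (u : Equiv.Perm (Fin n))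
    (hd : u ⟨i + 1, h⟩ < u ⟨i, Nat.lt_of_succ_lt h⟩) :
    invNum u = invNum (u * sNat n i) + 1 := by
  have hs : sNat n i = Equiv.swap ⟨i, Nat.lt_of_succ_lt h⟩ ⟨i + 1, h⟩ := by
    unfold sNat; rw [dif_pos h]
  have := invNum_mul_sNat_of_ascent h (u * sNat n i) (by
    simp only [hs, Equiv.Perm.mul_apply, Equiv.swap_apply_left, Equiv.swap_apply_right]
    exact hd)
  rw [mul_assoc, sNat_mul_self, mul_one] at this
  omega

lemma invNum_mul_sNat_le {n i : ℕ} (u : Equiv.Perm (Fin n)) :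
    invNum (u * sNat n i) ≤ invNum u + 1 := by
  by_cases h : i + 1 < n
  · rcases lt_or_ge (u ⟨i, Nat.lt_of_succ_lt h⟩) (u ⟨i + 1, h⟩) with hd | hd
    · rw [invNum_mul_sNat_of_ascent h u hd]
    · have hne : u ⟨i + 1, h⟩ ≠ u ⟨i, Nat.lt_of_succ_lt h⟩ := by
        intro hc
        have := u.injective hc
        simp [Fin.ext_iff] at this
      have := invNum_mul_sNat_of_descent h u (lt_of_le_of_ne hd hne)
      omega
  · unfold sNat; rw [dif_neg h, mul_one]; omega

lemma invNum_sNat_mul_le {n i : ℕ} (u : Equiv.Perm (Fin n)) :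
    invNum (sNat n i * u) ≤ invNum u + 1 := by
  rw [← invNum_inv (sNat n i * u), mul_inv_rev, sNat_inv]
  calc invNum (u⁻¹ * sNat n i) ≤ invNum u⁻¹ + 1 := invNum_mul_sNat_le _
    _ = invNum u + 1 := by rw [invNum_inv]

lemma invNum_conj_sNat_le {n i : ℕ} (u : Equiv.Perm (Fin n)) :
    invNum (sNat n i * u * sNat n i) ≤ invNum u + 2 := by
  calc invNum (sNat n i * u * sNat n i) ≤ invNum (sNat n i * u) + 1 := invNum_mul_sNat_le _
    _ ≤ invNum u + 1 + 1 := by have := invNum_sNat_mul_le (i := i) u; omega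
lemma conj_step {G : Type*} [Group G] (u ρ s : G) (hs : s * s = 1) :
    (u * s) * (s * ρ * s) * (u * s)⁻¹ = u * ρ * u⁻¹ := by
  have hsinv : s⁻¹ = s := inv_eq_of_mul_eq_one_right hs
  have hss : ∀ x : G, s * (s * x) = x := fun x => by rw [← mul_assoc, hs, one_mul]
  rw [mul_inv_rev, hsinv]
  simp only [mul_assoc, hss]

-- part 2 body (appended after p1 content when testing)
lemma eq_one_of_noDescent {n : ℕ} (u : Equiv.Perm (Fin n))
    (h : ∀ i (hi : i + 1 < n), u ⟨i, Nat.lt_of_succ_lt hi⟩ < u ⟨i + 1, hi⟩) : u = 1 := by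
  have hmono : ∀ p q : Fin n, p < q → u p < u q := by
    intro p q hpq
    obtain ⟨d, hd⟩ : ∃ d, (q : ℕ) = (p : ℕ) + d + 1 := ⟨(q : ℕ) - (p : ℕ) - 1, by
      rw [Fin.lt_def] at hpq; omega⟩
    clear hpq
    induction d generalizing q with
    | zero =>
      have hq : q = ⟨(p : ℕ) + 1, by have := q.2; omega⟩ := by
        apply Fin.ext; simp; omega
      rw [hq]
      simpa using h (p : ℕ) (by have := q.2; omega)
    | succ d ih =>
      have hq2 : ((p : ℕ) + d + 1) + 1 < n := by have := q.2; omega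
      have step := h ((p : ℕ) + d + 1) hq2
      have hq : q = ⟨(p : ℕ) + d + 1 + 1, hq2⟩ := by apply Fin.ext; simp; omega
      rw [hq]
      exact lt_trans (ih ⟨(p : ℕ) + d + 1, by omega⟩ (by simp)) step
  have le_apply : ∀ (f : Equiv.Perm (Fin n)), (∀ p q : Fin n, p < q → f p < f q) →
      ∀ x : Fin n, (x : ℕ) ≤ (f x : ℕ) := by
    intro f hf x
    obtain ⟨v, hv⟩ := x
    induction v with
    | zero => simp
    | succ m ih =>
      have h1 : f ⟨m, by omega⟩ < f ⟨m + 1, hv⟩ := hf _ _ (by simp [Fin.lt_def])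
      have h2 := ih (by omega)
      rw [Fin.lt_def] at h1
      simp only [Fin.val_mk] at h1 h2 ⊢
      omega
  have hmono' : ∀ p q : Fin n, p < q → u⁻¹ p < u⁻¹ q := by
    intro p q hpq
    rcases lt_trichotomy (u⁻¹ p) (u⁻¹ q) with h' | h' | h'
    · exact h'
    · exact absurd (congrArg u h') (by simp; exact fun hc => absurd (hc ▸ hpq) (lt_irrefl _))
    · have := hmono _ _ h'
      simp at this
      exact absurd hpq (not_lt.2 this.le)
  apply Equiv.ext
  intro x
  have h1 := le_apply u hmono x
  have h2 := le_apply u⁻¹ hmono' (u x)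
  simp only [Equiv.Perm.coe_inv, Equiv.symm_apply_apply] at h2
  simp only [Equiv.Perm.one_apply]
  exact Fin.ext (le_antisymm (by omega) h1)

lemma exists_descent {n : ℕ} (u : Equiv.Perm (Fin n)) (hu : u ≠ 1) :
    ∃ i, ∃ hi : i + 1 < n, u ⟨i + 1, hi⟩ < u ⟨i, Nat.lt_of_succ_lt hi⟩ := by
  by_contra hc
  push_neg at hc
  apply hu
  apply eq_one_of_noDescent
  intro i hi
  have h1 := hc i hi
  have hne : u ⟨i, Nat.lt_of_succ_lt hi⟩ ≠ u ⟨i + 1, hi⟩ := by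
    intro he
    have := u.injective he
    simp [Fin.ext_iff] at this
  rcases lt_trichotomy (u ⟨i, Nat.lt_of_succ_lt hi⟩) (u ⟨i + 1, hi⟩) with h' | h' | h'
  · exact h'
  · exact absurd h' hne
  · exact absurd h' (not_lt.2 h1)

lemma invNum_conj_le {n : ℕ} : ∀ (m : ℕ) (u ρ : Equiv.Perm (Fin n)), invNum u ≤ m →
    invNum (u * ρ * u⁻¹) ≤ invNum ρ + 2 * m := by
  intro m
  induction m with
  | zero =>
    intro u ρ hu
    by_cases h1 : u = 1
    · subst h1; simp
    · obtain ⟨i, hi, hd⟩ := exists_descent u h1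
      have := invNum_mul_sNat_of_descent hi u hd
      omega
  | succ m ih =>
    intro u ρ hu
    by_cases h1 : u = 1
    · subst h1; simp only [one_mul, inv_one, mul_one]; omega
    · obtain ⟨i, hi, hd⟩ := exists_descent u h1
      have hdec := invNum_mul_sNat_of_descent hi u hd
      set u' := u * sNat n i with hu'
      have hu'm : invNum u' ≤ m := by omega
      have hrw : u * ρ * u⁻¹ = u' * (sNat n i * ρ * sNat n i) * u'⁻¹ := by
        rw [hu']
        exact (conj_step u ρ (sNat n i) sNat_mul_self).symm
      rw [hrw]
      calc invNum (u' * (sNat n i * ρ * sNat n i) * u'⁻¹)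
          ≤ invNum (sNat n i * ρ * sNat n i) + 2 * m := ih u' _ hu'm
        _ ≤ invNum ρ + 2 + 2 * m := by have := invNum_conj_sNat_le (i := i) ρ; omega
        _ = invNum ρ + 2 * (m + 1) := by ring

lemma fold_invNum_le {n : ℕ} (l : List ℕ) (ρ : Equiv.Perm (Fin n)) :
    invNum (l.foldr (RSfpf n) ρ) ≤ invNum ρ + 2 * l.length := by
  induction l with
  | nil => simp
  | cons i t ih =>
    rw [List.foldr_cons, RSfpf]
    simp only [List.length_cons]
    split
    · next hc => omega
    · omega

lemma fold_eq_conj {n : ℕ} (l : List ℕ) (ρ : Equiv.Perm (Fin n))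
    (h : invNum (l.foldr (RSfpf n) ρ) = invNum ρ + 2 * l.length) :
    l.foldr (RSfpf n) ρ =
      (l.map (sNat n)).prod * ρ * ((l.map (sNat n)).prod)⁻¹ := by
  induction l with
  | nil => simp
  | cons i t ih =>
    rw [List.foldr_cons] at h ⊢
    set τ := t.foldr (RSfpf n) ρ with hτ
    have hbound := fold_invNum_le t ρ
    rw [← hτ] at hbound
    have hstep : invNum (RSfpf n i τ) ≤ invNum τ + 2 := by
      rw [RSfpf]; split
      · next hc => omega
      · omega
    simp only [List.length_cons] at h
    have hτeq : invNum τ = invNum ρ + 2 * t.length := by omega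
    have hcond : invNum (sNat n i * τ * sNat n i) = invNum τ + 2 := by
      by_contra hc
      have : RSfpf n i τ = τ := by rw [RSfpf, if_neg hc]
      rw [this] at h
      omega
    have hfold : RSfpf n i τ = sNat n i * τ * sNat n i := by rw [RSfpf, if_pos hcond]
    rw [hfold, ih hτeq]
    simp only [List.map_cons, List.prod_cons, mul_inv_rev, sNat_inv]
    simp [mul_assoc]

lemma exists_reduced_word {n : ℕ} : ∀ (m : ℕ) (u ρ : Equiv.Perm (Fin n)), invNum u = m →
    invNum (u * ρ * u⁻¹) = invNum ρ + 2 * m →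
    ∃ l : List ℕ, (l.map (sNat n)).prod = u ∧ l.length = m ∧
      l.foldr (RSfpf n) ρ = u * ρ * u⁻¹ := by
  intro m
  induction m with
  | zero =>
    intro u ρ hu _
    have h1 : u = 1 := by
      by_contra h1
      obtain ⟨i, hi, hd⟩ := exists_descent u h1
      have := invNum_mul_sNat_of_descent hi u hd
      omega
    subst h1
    exact ⟨[], by simp, rfl, by simp⟩
  | succ m ih =>
    intro u ρ hu hconj
    have h1 : u ≠ 1 := by intro h1; rw [h1, invNum_one] at hu; omega
    obtain ⟨i, hi, hd⟩ := exists_descent u h1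
    have hdec := invNum_mul_sNat_of_descent hi u hd
    set u' := u * sNat n i with hu'def
    have hu'm : invNum u' = m := by omega
    set ρ' := sNat n i * ρ * sNat n i with hρ'def
    have hback : u = u' * sNat n i := by
      rw [hu'def, mul_assoc, sNat_mul_self, mul_one]
    have hrw : u * ρ * u⁻¹ = u' * ρ' * u'⁻¹ := by
      rw [hu'def, hρ'def]
      exact (conj_step u ρ (sNat n i) sNat_mul_self).symm
    have hb1 : invNum (u' * ρ' * u'⁻¹) ≤ invNum ρ' + 2 * m := invNum_conj_le m u' ρ' (le_of_eq hu'm)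
    have hb2 : invNum ρ' ≤ invNum ρ + 2 := invNum_conj_sNat_le ρ
    rw [hrw] at hconj
    have hρ' : invNum ρ' = invNum ρ + 2 := by omega
    have hconj' : invNum (u' * ρ' * u'⁻¹) = invNum ρ' + 2 * m := by omega
    obtain ⟨l', hl1, hl2, hl3⟩ := ih u' ρ' hu'm hconj'
    refine ⟨l' ++ [i], ?_, by simp [hl2], ?_⟩
    · rw [List.map_append, List.prod_append]
      simp [hl1, ← hback]
    · rw [List.foldr_append]
      have hfirst : List.foldr (RSfpf n) ρ [i] = ρ' := by
        simp only [List.foldr_cons, List.foldr_nil]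
        rw [RSfpf, if_pos (by rw [← hρ'def]; omega)]
      rw [hfirst, hl3, hrw]
def cval (A B A' B' : ℕ) : ℕ :=
  (if A' < A then 1 else 0) + (if B' < A then 1 else 0) +
  (if A' < B then 1 else 0) + (if B' < B then 1 else 0)

def pcnt (A B A' B' : ℕ) : ℕ :=
  (if A < A' ∧ B' < B then 1 else 0) + (if A < B' ∧ A' < B then 1 else 0) +
  (if B < A' ∧ B' < A then 1 else 0) + (if B < B' ∧ A' < A then 1 else 0)

def Gfun {k : ℕ} (pos v : Fin k × Bool → Fin (2 * k)) (i j : Fin k) : ℕ :=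
  ∑ s : Bool, ∑ t : Bool, if pos (i, s) < pos (j, t) ∧ v (j, t) < v (i, s) then 1 else 0

lemma ML {k : ℕ} (F : Fin (2 * k) → Fin (2 * k)) (pos v : Fin k × Bool → Fin (2 * k))
    (hbij : Function.Bijective pos) (hv : ∀ P, F (pos P) = v P) :
    (Finset.univ.filter fun p : Fin (2 * k) × Fin (2 * k) =>
      p.1 < p.2 ∧ F p.2 < F p.1).card = ∑ i : Fin k, ∑ j : Fin k, Gfun pos v i j := by
  have h1 : ∀ (G : Fin (2 * k) → ℕ), ∑ x, G x = ∑ P : Fin k × Bool, G (pos P) :=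
    fun G => (Fintype.sum_bijective pos hbij _ G (fun _ => rfl)).symm
  rw [Finset.card_filter]
  calc (∑ p : Fin (2 * k) × Fin (2 * k), if p.1 < p.2 ∧ F p.2 < F p.1 then 1 else 0)
      = ∑ x : Fin (2 * k), ∑ y : Fin (2 * k), if x < y ∧ F y < F x then 1 else 0 := by
        rw [Fintype.sum_prod_type]
    _ = ∑ P : Fin k × Bool, ∑ y : Fin (2 * k), if pos P < y ∧ F y < F (pos P) then 1 else 0 :=
        h1 _
    _ = ∑ P : Fin k × Bool, ∑ Q : Fin k × Bool,
          if pos P < pos Q ∧ F (pos Q) < F (pos P) then 1 else 0 :=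
        Finset.sum_congr rfl fun P _ => h1 _
    _ = ∑ P : Fin k × Bool, ∑ Q : Fin k × Bool,
          if pos P < pos Q ∧ v Q < v P then 1 else 0 := by simp only [hv]
    _ = ∑ i : Fin k, ∑ s : Bool, ∑ j : Fin k, ∑ t : Bool,
          if pos (i, s) < pos (j, t) ∧ v (j, t) < v (i, s) then 1 else 0 := by
        rw [Fintype.sum_prod_type]
        exact Finset.sum_congr rfl fun i _ => Finset.sum_congr rfl fun s _ => by
          rw [Fintype.sum_prod_type]
    _ = ∑ i : Fin k, ∑ j : Fin k, Gfun pos v i j := by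
        refine Finset.sum_congr rfl fun i _ => ?_
        rw [Finset.sum_comm]
        rfl

lemma two_mul_sum {k : ℕ} (f : Fin k → Fin k → ℕ) :
    2 * (∑ i, ∑ j, f i j) = ∑ i, ∑ j, (f i j + f j i) := by
  simp only [Finset.sum_add_distrib]
  rw [two_mul]
  congr 1
  exact Finset.sum_comm

lemma sym_sum_eq {k : ℕ} (f g : Fin k → Fin k → ℕ)
    (h : ∀ i j, f i j + f j i = g i j + g j i) :
    ∑ i, ∑ j, f i j = ∑ i, ∑ j, g i j := by
  have h2 : 2 * (∑ i, ∑ j, f i j) = 2 * (∑ i, ∑ j, g i j) := by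
    rw [two_mul_sum, two_mul_sum]
    exact Finset.sum_congr rfl fun i _ => Finset.sum_congr rfl fun j _ => h i j
  omega

lemma sym_sum_le {k : ℕ} (f g : Fin k → Fin k → ℕ)
    (h : ∀ i j, f i j + f j i ≤ g i j + g j i) :
    ∑ i, ∑ j, f i j ≤ ∑ i, ∑ j, g i j := by
  have h2 : 2 * (∑ i, ∑ j, f i j) ≤ 2 * (∑ i, ∑ j, g i j) := by
    rw [two_mul_sum, two_mul_sum]
    exact Finset.sum_le_sum fun i _ => Finset.sum_le_sum fun j _ => h i j
  omega

lemma sym_sum_ext {k : ℕ} (f g : Fin k → Fin k → ℕ)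
    (hle : ∀ i j, f i j + f j i ≤ g i j + g j i)
    (heq : ∑ i, ∑ j, f i j = ∑ i, ∑ j, g i j) :
    ∀ i j, f i j + f j i = g i j + g j i := by
  have h2 : ∑ p : Fin k × Fin k, (f p.1 p.2 + f p.2 p.1)
      = ∑ p : Fin k × Fin k, (g p.1 p.2 + g p.2 p.1) := by
    rw [Fintype.sum_prod_type, Fintype.sum_prod_type]
    rw [← two_mul_sum, ← two_mul_sum, heq]
  have h3 := (Finset.sum_eq_sum_iff_of_le
    (fun (p : Fin k × Fin k) _ => hle p.1 p.2)).mp h2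
  intro i j
  exact h3 (i, j) (Finset.mem_univ _)

lemma G_of_before {k : ℕ} {pos v : Fin k × Bool → Fin (2 * k)} {i j : Fin k}
    (hpos : ∀ s t, pos (i, s) < pos (j, t)) :
    Gfun pos v i j
      = cval (v (i, false)) (v (i, true)) (v (j, false)) (v (j, true)) := by
  simp only [Gfun, Fintype.sum_bool, cval, hpos, true_and, Fin.lt_def]
  ring

lemma G_of_after {k : ℕ} {pos v : Fin k × Bool → Fin (2 * k)} {i j : Fin k}
    (hpos : ∀ s t, pos (j, t) < pos (i, s)) :
    Gfun pos v i j = 0 := by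
  have h : ∀ s t : Bool, ¬(pos (i, s) < pos (j, t)) := fun s t => lt_asymm (hpos s t)
  simp [Gfun, h]

lemma G_diag {k : ℕ} {pos v : Fin k × Bool → Fin (2 * k)} {i : Fin k}
    (hv : v (i, false) < v (i, true)) :
    Gfun pos v i i = if pos (i, true) < pos (i, false) then 1 else 0 := by
  have h1 : ¬(pos (i, true) < pos (i, true) ∧ v (i, true) < v (i, true)) := by simp
  have h2 : ¬(pos (i, false) < pos (i, false) ∧ v (i, false) < v (i, false)) := by simp
  have h3 : ¬(pos (i, false) < pos (i, true) ∧ v (i, true) < v (i, false)) :=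
    fun h => absurd h.2 (lt_asymm hv)
  have h4 : (pos (i, true) < pos (i, false) ∧ v (i, false) < v (i, true))
      ↔ pos (i, true) < pos (i, false) := and_iff_left hv
  simp only [Gfun, Fintype.sum_bool, if_neg h1, if_neg h2, if_neg h3, if_congr h4 rfl rfl]
  ring

lemma cval_cross_lo {A B A' B' : ℕ} (h1 : A < B) (h4 : B < A') (h2 : A' < B') :
    cval A B A' B' = 0 ∧ cval A' B' A B = 4 := by
  have e1 : ¬ A' < A := by omega
  have e2 : ¬ B' < A := by omega
  have e3 : ¬ A' < B := by omega
  have e4 : ¬ B' < B := by omega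
  have e5 : A < A' := by omega
  have e6 : B < A' := by omega
  have e7 : A < B' := by omega
  have e8 : B < B' := by omega
  constructor <;> simp [cval, e1, e2, e3, e4, e5, e6, e7, e8]

lemma cval_cross_hi {A B A' B' : ℕ} (h1 : A < B) (h3 : A < A') (h4 : A' < B) (h5 : B < B') :
    cval A B A' B' = 1 ∧ cval A' B' A B = 3 := by
  have e1 : ¬ A' < A := by omega
  have e2 : ¬ B' < A := by omega
  have e3 : A' < B := by omega
  have e4 : ¬ B' < B := by omega
  have e5 : A < A' := by omega
  have e6 : ¬ B < A' := by omega
  have e7 : A < B' := by omega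
  have e8 : B < B' := by omega
  constructor <;> simp [cval, e1, e2, e3, e4, e5, e6, e7, e8]

lemma cval_nested {A B A' B' : ℕ} (h1 : A < B) (h2 : A' < B') (h3 : A < A') (h4 : B' < B) :
    cval A B A' B' = 2 ∧ cval A' B' A B = 2 := by
  have e1 : ¬ A' < A := by omega
  have e2 : ¬ B' < A := by omega
  have e3 : A' < B := by omega
  have e4 : B' < B := by omega
  have e5 : A < A' := by omega
  have e6 : ¬ B < A' := by omega
  have e7 : A < B' := by omega
  have e8 : ¬ B < B' := by omega
  constructor <;> simp [cval, e1, e2, e3, e4, e5, e6, e7, e8]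

lemma pcnt_add {A B A' B' : ℕ} (h1 : A < B) (h2 : A' < B') (h3 : A < A')
    (d1 : B ≠ A') (d2 : B ≠ B') :
    pcnt A B A' B' + pcnt A' B' A B = 2 * cval A B A' B' := by
  have hc : B < A' ∨ (A' < B ∧ B < B') ∨ B' < B := by omega
  rcases hc with h | ⟨ha, hb⟩ | h
  · have e1 : A < A' := by omega
    have e2 : ¬ B' < B := by omega
    have e3 : A < B' := by omega
    have e4 : ¬ A' < B := by omega
    have e5 : B < A' := by omega
    have e6 : ¬ B' < A := by omega
    have e7 : B < B' := by omega
    have e8 : ¬ A' < A := by omega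
    simp [pcnt, cval, e1, e2, e3, e4, e5, e6, e7, e8]
  · have e1 : A < A' := by omega
    have e2 : ¬ B' < B := by omega
    have e3 : A < B' := by omega
    have e4 : A' < B := by omega
    have e5 : ¬ B < A' := by omega
    have e6 : ¬ B' < A := by omega
    have e7 : B < B' := by omega
    have e8 : ¬ A' < A := by omega
    simp [pcnt, cval, e1, e2, e3, e4, e5, e6, e7, e8]
  · have e1 : A < A' := by omega
    have e2 : B' < B := by omega
    have e3 : A < B' := by omega
    have e4 : A' < B := by omega
    have e5 : ¬ B < A' := by omega
    have e6 : ¬ B' < A := by omega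
    have e7 : ¬ B < B' := by omega
    have e8 : ¬ A' < A := by omega
    simp [pcnt, cval, e1, e2, e3, e4, e5, e6, e7, e8]
lemma alpha_apply_val {k : ℕ} (x : Fin (2 * k)) :
    ((alpha k) x : ℕ) = 2 * ((x : ℕ) / 2) + (1 - (x : ℕ) % 2) := rfl

lemma invNum_alpha {k : ℕ} : invNum (alpha k) = k := by
  unfold invNum
  conv_rhs => rw [← Fintype.card_fin k, ← Finset.card_univ]
  apply Finset.card_bij'
    (i := fun (p : Fin (2 * k) × Fin (2 * k)) _ => (⟨(p.1 : ℕ) / 2, by have := p.1.2; omega⟩ : Fin k))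
    (j := fun (m : Fin k) _ =>
      ((⟨2 * (m : ℕ), by have := m.2; omega⟩ : Fin (2 * k)),
       (⟨2 * (m : ℕ) + 1, by have := m.2; omega⟩ : Fin (2 * k))))
  case hi =>
    intro p hp
    exact Finset.mem_univ _
  case hj =>
    intro m hm
    simp only [Finset.mem_filter, Finset.mem_univ, true_and, Fin.lt_def, alpha_apply_val]
    constructor <;> omega
  case left_inv =>
    intro p hp
    simp only [Finset.mem_filter, Finset.mem_univ, true_and, Fin.lt_def, alpha_apply_val] at hp
    have h1 := p.1.2
    have h2 := p.2.2
    have key : (p.2 : ℕ) = (p.1 : ℕ) + 1 ∧ (p.1 : ℕ) % 2 = 0 := by omega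
    apply Prod.ext <;> (apply Fin.ext; simp only [Fin.val_mk]; omega)
  case right_inv =>
    intro m hm
    apply Fin.ext
    simp only [Fin.val_mk]
    omega
def vmap {k : ℕ} (a b : Fin k → Fin (2 * k)) (P : Fin k × Bool) : Fin (2 * k) :=
  cond P.2 (b P.1) (a P.1)

def posW {k : ℕ} (P : Fin k × Bool) : Fin (2 * k) :=
  ⟨2 * (P.1 : ℕ) + cond P.2 1 0, by
    have := P.1.2; cases P.2 <;> simp only [Bool.cond_false, Bool.cond_true] <;> omega⟩

section Main

variable {k : ℕ} {π : Equiv.Perm (Fin (2 * k))} {a b : Fin k → Fin (2 * k)}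

lemma pi_pi {n : ℕ} {ρ : Equiv.Perm (Fin n)} (hρ : ρ * ρ = 1) (x : Fin n) : ρ (ρ x) = x := by
  have := congrArg (fun u : Equiv.Perm (Fin n) => u x) hρ
  simpa using this

variable (hπ : π * π = 1) (hab : ∀ i, a i < b i) (hmono : StrictMono a)
  (hpair : ∀ i, π (a i) = b i)

include hπ hab hpair in
lemma ab_ne (i j : Fin k) : a i ≠ b j := by
  intro h
  have hba : b i = a j := by
    rw [← hpair i, h, ← hpair j, pi_pi hπ]
  have h1 := hab i
  have h2 := hab j
  rw [hba] at h1
  rw [← h] at h2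
  exact absurd (h1.trans h2) (lt_irrefl _)

include hπ hmono hpair in
lemma b_inj : Function.Injective b := by
  intro i j h
  have : π (π (a i)) = π (π (a j)) := by rw [hpair i, hpair j, h]
  rw [pi_pi hπ, pi_pi hπ] at this
  exact hmono.injective this

include hπ hab hmono hpair in
lemma vmap_inj : Function.Injective (vmap a b) := by
  rintro ⟨i, s⟩ ⟨j, t⟩ h
  cases s <;> cases t <;> simp only [vmap, cond] at h
  · rw [Prod.mk.injEq]; exact ⟨hmono.injective h, rfl⟩
  · exact absurd h (ab_ne hπ hab hpair i j)
  · exact absurd h.symm (ab_ne hπ hab hpair j i)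
  · rw [Prod.mk.injEq]; exact ⟨b_inj hπ hmono hpair h, rfl⟩

include hπ hab hmono hpair in
lemma vmap_bij : Function.Bijective (vmap a b) := by
  rw [Fintype.bijective_iff_injective_and_card]
  exact ⟨vmap_inj hπ hab hmono hpair, by simp [Fintype.card_prod]; ring⟩

lemma posW_bij : Function.Bijective (posW (k := k)) := by
  rw [Fintype.bijective_iff_injective_and_card]
  constructor
  · rintro ⟨i, s⟩ ⟨j, t⟩ h
    simp only [posW, Fin.ext_iff, Fin.val_mk] at h
    rw [Prod.mk.injEq]
    cases s <;> cases t <;>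
      simp only [Bool.cond_false, Bool.cond_true] at h <;>
      exact ⟨Fin.ext (by omega), by first | rfl | exact (by omega : False).elim⟩
  · rw [Fintype.card_prod, Fintype.card_fin, Fintype.card_bool, Fintype.card_fin]
    omega

lemma word_posW (i : Fin k) (s : Bool) :
    word k a b (posW (i, s)) = vmap a b (i, s) := by
  cases s
  · have h0 : ((posW (i, false) : Fin (2 * k)) : ℕ) = 2 * (i : ℕ) := rfl
    unfold word
    rw [if_pos (by rw [h0]; omega)]
    exact congrArg a (Fin.ext (by simp only [Fin.val_mk]; rw [h0]; omega))
  · have h0 : ((posW (i, true) : Fin (2 * k)) : ℕ) = 2 * (i : ℕ) + 1 := rfl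
    unfold word
    rw [if_neg (by rw [h0]; omega)]
    exact congrArg b (Fin.ext (by simp only [Fin.val_mk]; rw [h0]; omega))

lemma invWord_eq_sum :
    invWord k a b = ∑ i : Fin k, ∑ j : Fin k, Gfun posW (vmap a b) i j :=
  ML (word k a b) posW (vmap a b) posW_bij (fun P => word_posW P.1 P.2)

lemma invNum_eq_sum (hb : Function.Bijective (vmap a b)) (u : Equiv.Perm (Fin (2 * k))) :
    invNum u = ∑ i : Fin k, ∑ j : Fin k,
      Gfun (fun P => u⁻¹ (vmap a b P)) (vmap a b) i j :=
  ML u _ (vmap a b) ((Equiv.bijective u⁻¹).comp hb) (fun P => by simp)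
lemma N1 {pos : Fin k × Bool → Fin (2 * k)} (hinj : Function.Injective pos)
    (hflip : ∀ i : Fin k, (pos (i, true) : ℕ)
      = 2 * ((pos (i, false) : ℕ) / 2) + (1 - (pos (i, false) : ℕ) % 2))
    {i j : Fin k} (hij : i ≠ j) :
    (∀ s t, pos (i, s) < pos (j, t)) ∨ (∀ s t, pos (j, t) < pos (i, s)) := by
  have d : ∀ s t : Bool, (pos (i, s) : ℕ) ≠ (pos (j, t) : ℕ) := by
    intro s t h
    have h2 := hinj (Fin.ext h)
    rw [Prod.mk.injEq] at h2
    exact hij h2.1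
  have dii : (pos (i, false) : ℕ) ≠ (pos (i, true) : ℕ) := by
    intro h
    have h2 := hinj (Fin.ext h)
    simp at h2
  have djj : (pos (j, false) : ℕ) ≠ (pos (j, true) : ℕ) := by
    intro h
    have h2 := hinj (Fin.ext h)
    simp at h2
  have hfi := hflip i
  have hfj := hflip j
  have dFF := d false false
  have dFT := d false true
  have dTF := d true false
  have dTT := d true true
  rcases Nat.lt_or_ge (pos (i, false) : ℕ) (pos (j, false) : ℕ) with h | h
  · left; intro s t; rw [Fin.lt_def]; cases s <;> cases t <;> omega
  · right; intro s t; rw [Fin.lt_def]; cases s <;> cases t <;> omega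

lemma even_of_consec (hne : ∀ i j : Fin k, a i ≠ b j)
    {w : Equiv.Perm (Fin (2 * k))}
    (hsurj : Function.Surjective (vmap a b))
    (h1 : ∀ i, (w⁻¹ (b i) : ℕ) = (w⁻¹ (a i) : ℕ) + 1) :
    ∀ i, (w⁻¹ (a i) : ℕ) % 2 = 0 := by
  suffices H : ∀ N : ℕ, ∀ i : Fin k, (w⁻¹ (a i) : ℕ) = N → N % 2 = 0 by
    intro i; exact H _ i rfl
  intro N
  induction N using Nat.strong_induction_on with
  | _ N ih =>
    intro i hN
    by_contra hodd
    have hN1 : 1 ≤ N := by omega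
    have hNlt : N - 1 < 2 * k := by have := (w⁻¹ (a i)).2; omega
    obtain ⟨⟨j, s⟩, hP⟩ := hsurj (w ⟨N - 1, hNlt⟩)
    cases s
    · have hw : w⁻¹ (a j) = ⟨N - 1, hNlt⟩ := by
        rw [show a j = vmap a b (j, false) from rfl, hP]; simp
      have hbj : (w⁻¹ (b j) : ℕ) = N := by
        rw [h1 j, hw]; simp only [Fin.val_mk]; omega
      have hba : b j = a i := (Equiv.injective w⁻¹) (Fin.ext (by rw [hbj, hN]))
      exact hne i j hba.symm
    · have hw : (w⁻¹ (b j) : ℕ) = N - 1 := by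
        rw [show b j = vmap a b (j, true) from rfl, hP]; simp
      have h2 : (w⁻¹ (a j) : ℕ) = N - 2 := by have := h1 j; omega
      have hj := h1 j
      have := ih (N - 2) (by omega) j h2
      omega

lemma GW_before {i j : Fin k} (hij : i < j) :
    ∀ s t : Bool, posW (i, s) < posW (j, t) := by
  intro s t
  rw [Fin.lt_def]
  have hij' : (i : ℕ) < (j : ℕ) := hij
  show 2 * (i : ℕ) + cond s 1 0 < 2 * (j : ℕ) + cond t 1 0
  cases s <;> cases t <;> simp only [Bool.cond_false, Bool.cond_true] <;> omega

include hab in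
lemma GW_eval_lt {i j : Fin k} (hij : i < j) :
    Gfun posW (vmap a b) i j = cval (a i) (b i) (a j) (b j)
      ∧ Gfun posW (vmap a b) j i = 0 :=
  ⟨by rw [G_of_before (GW_before hij)]; rfl, G_of_after (fun s t => GW_before hij t s)⟩

include hab in
lemma GW_diag (i : Fin k) : Gfun posW (vmap a b) i i = 0 := by
  rw [G_diag (show vmap a b (i, false) < vmap a b (i, true) from hab i)]
  rw [if_neg]
  rw [Fin.lt_def]
  show ¬ (2 * (i : ℕ) + cond true 1 0 < 2 * (i : ℕ) + cond false 1 0)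
  simp only [Bool.cond_false, Bool.cond_true]
  omega

include hπ hab hmono hpair in
lemma count_eq_of_RHS (w : Equiv.Perm (Fin (2 * k)))
    (h1 : ∀ i, (w⁻¹ (b i) : ℕ) = (w⁻¹ (a i) : ℕ) + 1)
    (h2 : ∀ i j, i < j → b i < b j → w⁻¹ (b i) < w⁻¹ (a j)) :
    invNum w = invWord k a b := by
  have hb := vmap_bij hπ hab hmono hpair
  set v := vmap a b with hv
  set pos : Fin k × Bool → Fin (2 * k) := fun P => w⁻¹ (v P) with hposdef
  have hposF : ∀ i : Fin k, pos (i, false) = w⁻¹ (a i) := fun _ => rfl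
  have hposT : ∀ i : Fin k, pos (i, true) = w⁻¹ (b i) := fun _ => rfl
  have hinj : Function.Injective pos :=
    fun P Q h => vmap_inj hπ hab hmono hpair (Equiv.injective w⁻¹ h)
  have heven := even_of_consec (fun i j => ab_ne hπ hab hpair i j) hb.2 h1
  have hflip : ∀ i : Fin k, (pos (i, true) : ℕ)
      = 2 * ((pos (i, false) : ℕ) / 2) + (1 - (pos (i, false) : ℕ) % 2) := by
    intro i
    rw [hposT, hposF]
    have := h1 i
    have := heven i
    omega
  rw [invNum_eq_sum hb w, invWord_eq_sum]
  have keylt : ∀ i j : Fin k, i < j →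
      Gfun pos v i j + Gfun pos v j i = Gfun posW v i j + Gfun posW v j i := by
    intro i j hlt
    have hGW1 := (GW_eval_lt hab hlt).1
    have hGW2 := (GW_eval_lt hab hlt).2
    rcases lt_trichotomy (b i) (b j) with hbb | hbb | hbb
    · have hbef : ∀ s t, pos (i, s) < pos (j, t) := by
        intro s t
        have e1 := h1 i
        have e2 := h1 j
        have e3 : (w⁻¹ (b i) : ℕ) < (w⁻¹ (a j) : ℕ) := h2 i j hlt hbb
        cases s <;> cases t <;>
          rw [Fin.lt_def] <;> simp only [hposF, hposT] <;> omega
      rw [G_of_before hbef, G_of_after (fun s t => hbef t s), hGW1, hGW2]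
      rfl
    · exact absurd (b_inj hπ hmono hpair hbb) hlt.ne
    · rcases N1 hinj hflip hlt.ne with hbef | haft
      · rw [G_of_before hbef, G_of_after (fun s t => hbef t s), hGW1, hGW2]
        rfl
      · rw [G_of_after haft, G_of_before (fun s t => haft t s), hGW1, hGW2]
        have hcv := cval_nested (show (a i : ℕ) < (b i : ℕ) from hab i)
          (show (a j : ℕ) < (b j : ℕ) from hab j)
          (show (a i : ℕ) < (a j : ℕ) from hmono hlt)
          (show (b j : ℕ) < (b i : ℕ) from hbb)
        have e1 : (↑(v (j, false)) : ℕ) = (a j : ℕ) := rfl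
        have e2 : (↑(v (j, true)) : ℕ) = (b j : ℕ) := rfl
        have e3 : (↑(v (i, false)) : ℕ) = (a i : ℕ) := rfl
        have e4 : (↑(v (i, true)) : ℕ) = (b i : ℕ) := rfl
        rw [e1, e2, e3, e4]
        omega
  apply sym_sum_eq
  intro i j
  show Gfun pos v i j + Gfun pos v j i = Gfun posW v i j + Gfun posW v j i
  rcases lt_trichotomy i j with hlt | heq | hgt
  · exact keylt i j hlt
  · subst heq
    have hne2 : ¬ (pos (i, true) < pos (i, false)) := by
      rw [Fin.lt_def, hposF, hposT]; have := h1 i; omega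
    rw [GW_diag hab, G_diag (show v (i, false) < v (i, true) from hab i), if_neg hne2]
  · have := keylt j i hgt
    omega

include hπ hab hmono hpair in
lemma count_extract (w : Equiv.Perm (Fin (2 * k)))
    (hconj : π = w * alpha k * w⁻¹) (hinv : invNum w = invWord k a b) :
    (∀ i, (w⁻¹ (b i) : ℕ) = (w⁻¹ (a i) : ℕ) + 1) ∧
      ∀ i j, i < j → b i < b j → w⁻¹ (b i) < w⁻¹ (a j) := by
  have hb := vmap_bij hπ hab hmono hpair
  set v := vmap a b with hvdef
  set pos : Fin k × Bool → Fin (2 * k) := fun P => w⁻¹ (v P) with hposdef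
  have hposF : ∀ i : Fin k, pos (i, false) = w⁻¹ (a i) := fun _ => rfl
  have hposT : ∀ i : Fin k, pos (i, true) = w⁻¹ (b i) := fun _ => rfl
  have hinj : Function.Injective pos :=
    fun P Q h => vmap_inj hπ hab hmono hpair (Equiv.injective w⁻¹ h)
  have hwa : ∀ i, alpha k (w⁻¹ (a i)) = w⁻¹ (b i) := by
    intro i
    calc alpha k (w⁻¹ (a i)) = w⁻¹ (w (alpha k (w⁻¹ (a i)))) := by simp
      _ = w⁻¹ (b i) := by
          rw [← hpair i, hconj]
          simp [Equiv.Perm.mul_apply]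
  have hflip : ∀ i : Fin k, (pos (i, true) : ℕ)
      = 2 * ((pos (i, false) : ℕ) / 2) + (1 - (pos (i, false) : ℕ) % 2) := by
    intro i
    rw [hposT, hposF, ← hwa i, alpha_apply_val]
  have hd : ∀ i : Fin k, (pos (i, false) : ℕ) ≠ (pos (i, true) : ℕ) := by
    intro i h
    have h2 := hinj (Fin.ext h)
    simp at h2
  -- pointwise inequality
  have keylt : ∀ i j : Fin k, i < j →
      Gfun posW v i j + Gfun posW v j i ≤ Gfun pos v i j + Gfun pos v j i := by
    intro i j hlt
    have hGW1 := (GW_eval_lt hab hlt).1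
    have hGW2 := (GW_eval_lt hab hlt).2
    rcases N1 hinj hflip hlt.ne with hbef | haft
    · rw [G_of_before hbef, G_of_after (fun s t => hbef t s), hGW1, hGW2]
      have e3 : (↑(v (i, false)) : ℕ) = (a i : ℕ) := rfl
      have e4 : (↑(v (i, true)) : ℕ) = (b i : ℕ) := rfl
      have e1 : (↑(v (j, false)) : ℕ) = (a j : ℕ) := rfl
      have e2 : (↑(v (j, true)) : ℕ) = (b j : ℕ) := rfl
      rw [e1, e2, e3, e4]
    · rw [G_of_after haft, G_of_before (fun s t => haft t s), hGW1, hGW2]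
      have e3 : (↑(v (i, false)) : ℕ) = (a i : ℕ) := rfl
      have e4 : (↑(v (i, true)) : ℕ) = (b i : ℕ) := rfl
      have e1 : (↑(v (j, false)) : ℕ) = (a j : ℕ) := rfl
      have e2 : (↑(v (j, true)) : ℕ) = (b j : ℕ) := rfl
      rw [e1, e2, e3, e4]
      have hA : (a i : ℕ) < (b i : ℕ) := hab i
      have hA' : (a j : ℕ) < (b j : ℕ) := hab j
      have hAA : (a i : ℕ) < (a j : ℕ) := hmono hlt
      have hvne : (b i : ℕ) ≠ (a j : ℕ) :=
        fun h => (ab_ne hπ hab hpair j i) (Fin.ext h.symm)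
      have hbne : (b i : ℕ) ≠ (b j : ℕ) :=
        fun h => hlt.ne (b_inj hπ hmono hpair (Fin.ext h))
      rcases lt_trichotomy (b i : ℕ) (b j : ℕ) with hbb | hbb | hbb
      · rcases lt_trichotomy (b i : ℕ) (a j : ℕ) with hba | hba | hba
        · have := cval_cross_lo hA hba hA'
          omega
        · exact absurd hba hvne
        · have := cval_cross_hi hA hAA hba hbb
          omega
      · exact absurd hbb hbne
      · have := cval_nested hA hA' hAA hbb
        omega
  have hle : ∀ i j : Fin k,
      Gfun posW v i j + Gfun posW v j i ≤ Gfun pos v i j + Gfun pos v j i := by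
    intro i j
    rcases lt_trichotomy i j with hlt | heq | hgt
    · exact keylt i j hlt
    · subst heq
      rw [GW_diag hab]
      exact Nat.zero_le _
    · have := keylt j i hgt
      omega
  have hsums : (∑ i : Fin k, ∑ j : Fin k, Gfun posW v i j)
      = ∑ i : Fin k, ∑ j : Fin k, Gfun pos v i j := by
    rw [← invWord_eq_sum, ← invNum_eq_sum hb w, hinv]
  have hext := sym_sum_ext _ _ hle hsums
  constructor
  · intro i
    have he := hext i i
    rw [GW_diag hab, G_diag (show v (i, false) < v (i, true) from hab i)] at he
    have hG0 : ¬ (pos (i, true) < pos (i, false)) := by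
      intro hcon
      rw [if_pos hcon] at he
      omega
    rw [Fin.lt_def] at hG0
    have hf := hflip i
    have hdi := hd i
    rw [hposF i, hposT i] at hf hdi
    rw [hposF i, hposT i] at hG0
    omega
  · intro i j hij hbb
    rcases N1 hinj hflip hij.ne with hbef | haft
    · exact hbef true false
    · exfalso
      have he := hext i j
      rw [(GW_eval_lt hab hij).1, (GW_eval_lt hab hij).2,
        G_of_after haft, G_of_before (fun s t => haft t s)] at he
      have e3 : (↑(v (i, false)) : ℕ) = (a i : ℕ) := rfl
      have e4 : (↑(v (i, true)) : ℕ) = (b i : ℕ) := rfl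
      have e1 : (↑(v (j, false)) : ℕ) = (a j : ℕ) := rfl
      have e2 : (↑(v (j, true)) : ℕ) = (b j : ℕ) := rfl
      rw [e1, e2, e3, e4] at he
      have hA : (a i : ℕ) < (b i : ℕ) := hab i
      have hA' : (a j : ℕ) < (b j : ℕ) := hab j
      have hAA : (a i : ℕ) < (a j : ℕ) := hmono hij
      have hvne : (b i : ℕ) ≠ (a j : ℕ) :=
        fun h => (ab_ne hπ hab hpair j i) (Fin.ext h.symm)
      have hbb' : (b i : ℕ) < (b j : ℕ) := hbb
      rcases lt_trichotomy (b i : ℕ) (a j : ℕ) with hba | hba | hba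
      · have := cval_cross_lo hA hba hA'
        omega
      · exact absurd hba hvne
      · have := cval_cross_hi hA hAA hba hbb'
        omega

include hπ hab hmono hpair in
lemma invNum_pi_eq : invNum π = k + 2 * invWord k a b := by
  have hb := vmap_bij hπ hab hmono hpair
  set v := vmap a b with hvdef
  set posπ : Fin k × Bool → Fin (2 * k) := fun P => v (P.1, !P.2) with hposdef
  have hbijflip : Function.Bijective (fun P : Fin k × Bool => (P.1, !P.2)) :=
    Function.Involutive.bijective (fun P => by simp)
  have hbijπ : Function.Bijective posπ := hb.comp hbijflip
  have hvπ : ∀ P, π (posπ P) = v P := by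
    rintro ⟨i, s⟩
    cases s
    · show π (b i) = a i
      rw [← hpair i, pi_pi hπ]
    · exact hpair i
  have hsum : invNum π = ∑ i : Fin k, ∑ j : Fin k, Gfun posπ v i j :=
    ML π posπ v hbijπ hvπ
  have hG : ∀ i j : Fin k, Gfun posπ v i j = pcnt (a i) (b i) (a j) (b j) := by
    intro i j
    simp only [Gfun, Fintype.sum_bool, pcnt, Fin.lt_def,
      show ∀ i : Fin k, posπ (i, true) = a i from fun _ => rfl,
      show ∀ i : Fin k, posπ (i, false) = b i from fun _ => rfl,
      show ∀ i : Fin k, v (i, true) = b i from fun _ => rfl,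
      show ∀ i : Fin k, v (i, false) = a i from fun _ => rfl]
    ring
  have keylt : ∀ i j : Fin k, i < j → Gfun posπ v i j + Gfun posπ v j i
      = 2 * (Gfun posW v i j + Gfun posW v j i) := by
    intro i j hlt
    rw [hG, hG, (GW_eval_lt hab hlt).1, (GW_eval_lt hab hlt).2]
    have hA : (a i : ℕ) < (b i : ℕ) := hab i
    have hA' : (a j : ℕ) < (b j : ℕ) := hab j
    have hAA : (a i : ℕ) < (a j : ℕ) := hmono hlt
    have hvne : (b i : ℕ) ≠ (a j : ℕ) :=
      fun h => (ab_ne hπ hab hpair j i) (Fin.ext h.symm)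
    have hbne : (b i : ℕ) ≠ (b j : ℕ) :=
      fun h => hlt.ne (b_inj hπ hmono hpair (Fin.ext h))
    have := pcnt_add hA hA' hAA hvne hbne
    omega
  have key : ∀ i j : Fin k, Gfun posπ v i j + Gfun posπ v j i
      = 2 * (Gfun posW v i j + Gfun posW v j i) + (if i = j then 2 else 0) := by
    intro i j
    rcases lt_trichotomy i j with hlt | heq | hgt
    · rw [if_neg hlt.ne, keylt i j hlt]
      omega
    · subst heq
      rw [if_pos rfl, GW_diag hab, hG]
      have hA : (a i : ℕ) < (b i : ℕ) := hab i
      have hBA : ¬ (b i : ℕ) < (a i : ℕ) := by omega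
      have hp : pcnt (a i) (b i) (a i) (b i) = 1 := by
        simp [pcnt, hA, hBA]
      omega
    · rw [if_neg hgt.ne']
      have := keylt j i hgt
      omega
  have hdiag : (∑ i : Fin k, ∑ j : Fin k, (if i = j then 2 else 0)) = 2 * k := by
    have h1 : ∀ i : Fin k, (∑ j : Fin k, (if i = j then 2 else 0)) = 2 := by
      intro i
      rw [Finset.sum_ite_eq]
      simp
    rw [Finset.sum_congr rfl (fun i _ => h1 i)]
    simp [Finset.sum_const, Finset.card_univ]
    omega
  have hW : invWord k a b = ∑ i : Fin k, ∑ j : Fin k, Gfun posW v i j := invWord_eq_sum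
  have h2 : 2 * invNum π = 4 * invWord k a b + 2 * k := by
    calc 2 * invNum π
        = ∑ i : Fin k, ∑ j : Fin k, (Gfun posπ v i j + Gfun posπ v j i) := by
          rw [hsum, two_mul_sum]
      _ = ∑ i : Fin k, ∑ j : Fin k,
            (2 * (Gfun posW v i j + Gfun posW v j i) + (if i = j then 2 else 0)) := by
          exact Finset.sum_congr rfl fun i _ => Finset.sum_congr rfl fun j _ => key i j
      _ = (∑ i : Fin k, ∑ j : Fin k, 2 * (Gfun posW v i j + Gfun posW v j i))
            + (∑ i : Fin k, ∑ j : Fin k, (if i = j then 2 else 0)) := by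
          simp [Finset.sum_add_distrib]
      _ = 2 * (∑ i : Fin k, ∑ j : Fin k, (Gfun posW v i j + Gfun posW v j i)) + 2 * k := by
          rw [hdiag, Finset.mul_sum]
          congr 1
          exact Finset.sum_congr rfl fun i _ => (Finset.mul_sum _ _ _).symm
      _ = 2 * (2 * invWord k a b) + 2 * k := by
          rw [← two_mul_sum, ← hW]
      _ = 4 * invWord k a b + 2 * k := by ring
  omega

include hπ hab hmono hpair in
lemma conj_of_RHS (w : Equiv.Perm (Fin (2 * k)))
    (h1 : ∀ i, (w⁻¹ (b i) : ℕ) = (w⁻¹ (a i) : ℕ) + 1) :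
    π = w * alpha k * w⁻¹ := by
  have hb := vmap_bij hπ hab hmono hpair
  have heven := even_of_consec (fun i j => ab_ne hπ hab hpair i j) hb.2 h1
  apply Equiv.ext
  intro x
  obtain ⟨⟨i, s⟩, rfl⟩ := hb.2 x
  cases s
  · show π (a i) = (w * alpha k * w⁻¹) (a i)
    rw [hpair i, Equiv.Perm.mul_apply, Equiv.Perm.mul_apply]
    have hα : alpha k (w⁻¹ (a i)) = w⁻¹ (b i) := by
      apply Fin.ext
      rw [alpha_apply_val]
      have := h1 i
      have := heven i
      omega
    rw [hα, Equiv.Perm.coe_inv, Equiv.apply_symm_apply]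
  · show π (b i) = (w * alpha k * w⁻¹) (b i)
    rw [show π (b i) = a i from by rw [← hpair i, pi_pi hπ],
      Equiv.Perm.mul_apply, Equiv.Perm.mul_apply]
    have hα : alpha k (w⁻¹ (b i)) = w⁻¹ (a i) := by
      apply Fin.ext
      rw [alpha_apply_val]
      have := h1 i
      have := heven i
      omega
    rw [hα, Equiv.Perm.coe_inv, Equiv.apply_symm_apply]

end Main

/-- Corollary (W-sets of fixed-point free involutions).  Let
`π' = (a_1,b_1)⋯(a_k,b_k) ∈ S_{2k}` be a fixed-point free involution in standard form.
Then `m(w)·α' = π'` (via a reduced word of `w`) with `ℓ(w) = L'(π')` (the inversion number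
of the word `(a_1,b_1,…,a_k,b_k)`) if and only if (1) each `a_i` occurs immediately before
`b_i` in the one-line notation of `w`, and (2) whenever `i < j` and `b_i < b_j`, `b_i`
occurs before `a_j` in `w`. -/
theorem stmt12 (k : ℕ) (π : Equiv.Perm (Fin (2 * k))) (a b : Fin k → Fin (2 * k))
    (hπ : π * π = 1) (hfpf : ∀ x, π x ≠ x) (hab : ∀ i, a i < b i)
    (hmono : StrictMono a) (hpair : ∀ i, π (a i) = b i)
    (w : Equiv.Perm (Fin (2 * k))) :
    ((∃ l : List ℕ, (l.map (sNat (2 * k))).prod = w ∧ l.length = invNum w ∧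
        l.foldr (RSfpf (2 * k)) (alpha k) = π) ∧
      invNum w = invWord k a b) ↔
    ((∀ i, (w⁻¹ (b i) : ℕ) = (w⁻¹ (a i) : ℕ) + 1) ∧
      ∀ i j, i < j → b i < b j → w⁻¹ (b i) < w⁻¹ (a j)) := by
  have hA : invNum π = k + 2 * invWord k a b := invNum_pi_eq hπ hab hmono hpair
  constructor
  · rintro ⟨⟨l, hprod, hlen, hfold⟩, hinv⟩
    have hlen2 : l.length = invWord k a b := by rw [hlen, hinv]
    have heq : invNum (l.foldr (RSfpf (2 * k)) (alpha k))
        = invNum (alpha k) + 2 * l.length := by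
      rw [hfold, invNum_alpha, hA, hlen2]
    have hconj := fold_eq_conj l (alpha k) heq
    rw [hfold, hprod] at hconj
    exact count_extract hπ hab hmono hpair w hconj hinv
  · rintro ⟨h1, h2⟩
    have hinv : invNum w = invWord k a b := count_eq_of_RHS hπ hab hmono hpair w h1 h2
    have hconj : π = w * alpha k * w⁻¹ := conj_of_RHS hπ hab hmono hpair w h1
    have hc2 : invNum (w * alpha k * w⁻¹) = invNum (alpha k) + 2 * invNum w := by
      rw [← hconj, hA, invNum_alpha, hinv]
    obtain ⟨l, hp, hl, hf⟩ := exists_reduced_word (invNum w) w (alpha k) rfl hc2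
    exact ⟨⟨l, hp, hl, by rw [hf, ← hconj]⟩, hinv⟩
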